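/- Let ℓ be an odd prime and let B : ℤ × ℤ → ℤ be a function satisfying, for all integers D ≥ 1 and d ≥ 0, the recurrence B(D, ℓ²d) = ℓ·B(ℓ²D, d) + (D/ℓ)·B(D,d) + B(D/ℓ², d) − ℓ·B(D, d/ℓ²) − (−d/ℓ)·B(D,d). Then for all integers D ≥ 1, d ≥ 0 and all n ≥ 1 one has B(D, ℓ^{2n} d) = ℓⁿ·B(ℓ^{2n} D, d) + Σ_{t=0}^{n−1} (D/ℓ)^{n−t−1}·( B(D/ℓ², ℓ^{2t} d) − ℓ^{t+1}·B(ℓ^{2t} D, d/ℓ²) ) + Σ_{t=0}^{n−1} (D/ℓ)^{n−t−1}·( (D/ℓ) − (−d/ℓ) )·ℓ^{t}·B(ℓ^{2t} D, d). -/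
import Mathlib


theorem sum_key (χ L ψ : ℤ) (a c e : ℕ → ℤ) (n : ℕ) :
    (∑ t ∈ Finset.range (n+1), χ^(n-t) * (L^t * (L * a (t+1) +
        (if t = 0 then χ * a 0 + c 0 else a (t-1)) - L * e t - ψ * a t)))
      + (∑ t ∈ Finset.range n, χ^(n-t-1) * (c (t+1) - L^(t+1) * a t))
    = L^(n+1) * a (n+1)
      + (∑ t ∈ Finset.range (n+1), χ^(n-t) * (c t - L^(t+1) * e t))
      + (∑ t ∈ Finset.range (n+1), χ^(n-t) * ((χ - ψ) * L^t * a t)) := by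
  induction n with
  | zero => simp; ring
  | succ n ih =>
    have hshift1 : ∀ f : ℕ → ℤ, (∑ t ∈ Finset.range (n+1), χ^(n+1-t) * f t)
        = χ * ∑ t ∈ Finset.range (n+1), χ^(n-t) * f t := by
      intro f
      rw [Finset.mul_sum]
      refine Finset.sum_congr rfl fun t ht => ?_
      have ht' := Finset.mem_range.mp ht
      obtain ⟨k, hk1, hk2⟩ : ∃ k, n + 1 - t = k + 1 ∧ n - t = k := ⟨n - t, by omega, rfl⟩
      rw [hk1, hk2, pow_succ]; ring
    have hshift2 : ∀ f : ℕ → ℤ, (∑ t ∈ Finset.range n, χ^(n-t) * f t)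
        = χ * ∑ t ∈ Finset.range n, χ^(n-t-1) * f t := by
      intro f
      rw [Finset.mul_sum]
      refine Finset.sum_congr rfl fun t ht => ?_
      have ht' := Finset.mem_range.mp ht
      obtain ⟨k, hk1, hk2⟩ : ∃ k, n - t - 1 = k ∧ n - t = k + 1 := ⟨n - t - 1, rfl, by omega⟩
      rw [hk1, hk2, pow_succ]; ring
    have hsub : ∀ t : ℕ, n + 1 - t - 1 = n - t := fun t => by omega
    have p1 : (∑ t ∈ Finset.range (n+1+1), χ^(n+1-t) * (L^t * (L * a (t+1) +
        (if t = 0 then χ * a 0 + c 0 else a (t-1)) - L * e t - ψ * a t)))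
        = χ * (∑ t ∈ Finset.range (n+1), χ^(n-t) * (L^t * (L * a (t+1) +
            (if t = 0 then χ * a 0 + c 0 else a (t-1)) - L * e t - ψ * a t)))
          + L^(n+1) * (L * a (n+1+1) + a n - L * e (n+1) - ψ * a (n+1)) := by
      rw [Finset.sum_range_succ, hshift1]
      simp only [Nat.add_sub_cancel, Nat.sub_self, pow_zero, one_mul, Nat.succ_ne_zero,
        if_false]
    have p2 : (∑ t ∈ Finset.range (n+1), χ^(n+1-t-1) * (c (t+1) - L^(t+1) * a t))
        = χ * (∑ t ∈ Finset.range n, χ^(n-t-1) * (c (t+1) - L^(t+1) * a t))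
          + (c (n+1) - L^(n+1) * a n) := by
      rw [Finset.sum_range_succ]
      simp only [hsub, Nat.sub_self, pow_zero, one_mul]
      rw [hshift2]
    have p3 : (∑ t ∈ Finset.range (n+1+1), χ^(n+1-t) * (c t - L^(t+1) * e t))
        = χ * (∑ t ∈ Finset.range (n+1), χ^(n-t) * (c t - L^(t+1) * e t))
          + (c (n+1) - L^(n+1+1) * e (n+1)) := by
      rw [Finset.sum_range_succ, hshift1]
      simp only [Nat.sub_self, pow_zero, one_mul]
    have p4 : (∑ t ∈ Finset.range (n+1+1), χ^(n+1-t) * ((χ - ψ) * L^t * a t))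
        = χ * (∑ t ∈ Finset.range (n+1), χ^(n-t) * ((χ - ψ) * L^t * a t))
          + (χ - ψ) * L^(n+1) * a (n+1) := by
      rw [Finset.sum_range_succ, hshift1]
      simp only [Nat.sub_self, pow_zero, one_mul]
    rw [p1, p2, p3, p4]
    linear_combination χ * ih


/-- Proposition 3.2, Jenkins-type recursion: from the one-step
recurrence for the coefficients `B(D, d)`, the `n`-step formula follows.
Here `legendreSym ℓ m : ℤ` is the Legendre symbol, and `B(m/ℓ², d)` is interpreted
as `0` unless `ℓ² ∣ m` (encoded via `if` expressions). -/
theorem stmt_1 (ℓ : ℕ) [Fact ℓ.Prime] (hℓodd : Odd ℓ)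
    (B : ℤ × ℤ → ℤ)
    (hrec : ∀ D d : ℤ, 1 ≤ D → 0 ≤ d →
      B (D, (ℓ : ℤ) ^ 2 * d) =
        (ℓ : ℤ) * B ((ℓ : ℤ) ^ 2 * D, d) + legendreSym ℓ D * B (D, d)
          + (if (ℓ : ℤ) ^ 2 ∣ D then B (D / (ℓ : ℤ) ^ 2, d) else 0)
          - (ℓ : ℤ) * (if (ℓ : ℤ) ^ 2 ∣ d then B (D, d / (ℓ : ℤ) ^ 2) else 0)
          - legendreSym ℓ (-d) * B (D, d)) :
    ∀ D d : ℤ, 1 ≤ D → 0 ≤ d → ∀ n : ℕ, 1 ≤ n →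
      B (D, (ℓ : ℤ) ^ (2 * n) * d) =
        (ℓ : ℤ) ^ n * B ((ℓ : ℤ) ^ (2 * n) * D, d)
          + ∑ t ∈ Finset.range n, (legendreSym ℓ D) ^ (n - t - 1) *
              ((if (ℓ : ℤ) ^ 2 ∣ D then B (D / (ℓ : ℤ) ^ 2, (ℓ : ℤ) ^ (2 * t) * d) else 0)
                - (ℓ : ℤ) ^ (t + 1) *
                  (if (ℓ : ℤ) ^ 2 ∣ d then B ((ℓ : ℤ) ^ (2 * t) * D, d / (ℓ : ℤ) ^ 2) else 0))
          + ∑ t ∈ Finset.range n, (legendreSym ℓ D) ^ (n - t - 1) *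
              ((legendreSym ℓ D - legendreSym ℓ (-d)) * (ℓ : ℤ) ^ t *
                B ((ℓ : ℤ) ^ (2 * t) * D, d)) := by
  intro D d hD hd n hn
  have hp : ℓ.Prime := Fact.out
  have hL1 : (1:ℤ) ≤ (ℓ:ℤ) := by exact_mod_cast hp.one_lt.le
  have hL2ne : ((ℓ:ℤ)^2) ≠ 0 := by positivity
  induction n, hn using Nat.le_induction generalizing d with
  | base =>
    simp only [Finset.sum_range_one, Nat.sub_zero, Nat.sub_self, mul_one, mul_zero,
      pow_zero, pow_one, one_mul, zero_add]
    linear_combination hrec D d hD hd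
  | succ n hn ih =>
    have hq : ∀ x : ℤ, ((ℓ:ℤ)^2*x)/(ℓ:ℤ)^2 = x := fun x => Int.mul_ediv_cancel_left _ hL2ne
    have hψ' : legendreSym ℓ (-((ℓ:ℤ)^2*d)) = 0 := by
      rw [legendreSym.eq_zero_iff]
      push_cast
      rw [ZMod.natCast_self]
      simp
    have hleg : ∀ s : ℕ, legendreSym ℓ ((ℓ:ℤ)^(2*(s+1))*D) = 0 := by
      intro s
      rw [legendreSym.eq_zero_iff]
      push_cast
      rw [ZMod.natCast_self]
      simp
    have h1 := ih ((ℓ:ℤ)^2*d) (by positivity)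
    rw [show ((ℓ:ℤ)^(2*(n+1))*d) = (ℓ:ℤ)^(2*n)*((ℓ:ℤ)^2*d) from by ring, h1]
    have hstep : ∀ t : ℕ, B ((ℓ:ℤ)^(2*t)*D, (ℓ:ℤ)^2*d)
        = (ℓ:ℤ) * B ((ℓ:ℤ)^(2*(t+1))*D, d)
          + (if t = 0 then legendreSym ℓ D * B ((ℓ:ℤ)^(2*0)*D, d)
              + (if (ℓ:ℤ)^2 ∣ D then B (D/(ℓ:ℤ)^2, (ℓ:ℤ)^(2*0)*d) else 0)
            else B ((ℓ:ℤ)^(2*(t-1))*D, d))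
          - (ℓ:ℤ) * (if (ℓ:ℤ)^2 ∣ d then B ((ℓ:ℤ)^(2*t)*D, d/(ℓ:ℤ)^2) else 0)
          - legendreSym ℓ (-d) * B ((ℓ:ℤ)^(2*t)*D, d) := by
      intro t
      match t with
      | 0 =>
        simp only [mul_zero, pow_zero, one_mul, zero_add, mul_one, eq_self_iff_true, if_true]
        linear_combination hrec D d hD hd
      | s+1 =>
        have hDs : (1:ℤ) ≤ (ℓ:ℤ)^(2*(s+1))*D := by
          have h1p : (1:ℤ) ≤ (ℓ:ℤ)^(2*(s+1)) := one_le_pow₀ hL1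
          nlinarith
        have h := hrec ((ℓ:ℤ)^(2*(s+1))*D) d hDs hd
        rw [show (ℓ:ℤ)^2*((ℓ:ℤ)^(2*(s+1))*D) = (ℓ:ℤ)^(2*(s+1+1))*D from by ring] at h
        have hqot : ((ℓ:ℤ)^(2*(s+1))*D)/(ℓ:ℤ)^2 = (ℓ:ℤ)^(2*s)*D := by
          rw [show (ℓ:ℤ)^(2*(s+1))*D = (ℓ:ℤ)^2*((ℓ:ℤ)^(2*s)*D) from by ring]
          exact hq _
        have hdvd : ((ℓ:ℤ)^2 ∣ (ℓ:ℤ)^(2*(s+1))*D) := ⟨(ℓ:ℤ)^(2*s)*D, by ring⟩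
        simp only [hdvd, if_true, hqot, hleg s] at h
        rw [if_neg (Nat.succ_ne_zero s), Nat.succ_sub_one]
        linear_combination h
    -- abbreviation target shapes
    have hS2 : (∑ t ∈ Finset.range n, (legendreSym ℓ D)^(n-t-1) *
          ((if (ℓ:ℤ)^2 ∣ D then B (D/(ℓ:ℤ)^2, (ℓ:ℤ)^(2*t)*((ℓ:ℤ)^2*d)) else 0)
            - (ℓ:ℤ)^(t+1) * (if (ℓ:ℤ)^2 ∣ (ℓ:ℤ)^2*d then B ((ℓ:ℤ)^(2*t)*D, ((ℓ:ℤ)^2*d)/(ℓ:ℤ)^2) else 0)))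
        = (∑ t ∈ Finset.range n, (legendreSym ℓ D)^(n-t-1) *
            ((if (ℓ:ℤ)^2 ∣ D then B (D/(ℓ:ℤ)^2, (ℓ:ℤ)^(2*(t+1))*d) else 0)
              - (ℓ:ℤ)^(t+1) * B ((ℓ:ℤ)^(2*t)*D, d))) := by
      refine Finset.sum_congr rfl fun t _ => ?_
      have harg : (ℓ:ℤ)^(2*t)*((ℓ:ℤ)^2*d) = (ℓ:ℤ)^(2*(t+1))*d := by ring
      have hdvd2 : (ℓ:ℤ)^2 ∣ (ℓ:ℤ)^2*d := dvd_mul_right _ _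
      simp only [harg, hdvd2, if_true, hq]
    have hS3 : (∑ t ∈ Finset.range n, (legendreSym ℓ D)^(n-t-1) *
          ((legendreSym ℓ D - legendreSym ℓ (-((ℓ:ℤ)^2*d))) * (ℓ:ℤ)^t *
            B ((ℓ:ℤ)^(2*t)*D, (ℓ:ℤ)^2*d)))
        = (∑ t ∈ Finset.range n, (legendreSym ℓ D)^(n-t) *
            ((ℓ:ℤ)^t * B ((ℓ:ℤ)^(2*t)*D, (ℓ:ℤ)^2*d))) := by
      refine Finset.sum_congr rfl fun t ht => ?_
      have ht' := Finset.mem_range.mp ht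
      obtain ⟨k, hk1, hk2⟩ : ∃ k, n - t - 1 = k ∧ n - t = k + 1 := ⟨n - t - 1, rfl, by omega⟩
      rw [hψ', hk1, hk2, pow_succ]
      ring
    have e5 : (ℓ:ℤ)^n * B ((ℓ:ℤ)^(2*n)*D, (ℓ:ℤ)^2*d)
          + (∑ t ∈ Finset.range n, (legendreSym ℓ D)^(n-t) *
              ((ℓ:ℤ)^t * B ((ℓ:ℤ)^(2*t)*D, (ℓ:ℤ)^2*d)))
        = (∑ t ∈ Finset.range (n+1), (legendreSym ℓ D)^(n-t) *
            ((ℓ:ℤ)^t * B ((ℓ:ℤ)^(2*t)*D, (ℓ:ℤ)^2*d))) := by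
      rw [Finset.sum_range_succ, Nat.sub_self, pow_zero, one_mul]
      ring
    have e6 : (∑ t ∈ Finset.range (n+1), (legendreSym ℓ D)^(n-t) *
            ((ℓ:ℤ)^t * B ((ℓ:ℤ)^(2*t)*D, (ℓ:ℤ)^2*d)))
        = (∑ t ∈ Finset.range (n+1), (legendreSym ℓ D)^(n-t) *
            ((ℓ:ℤ)^t * ((ℓ:ℤ) * B ((ℓ:ℤ)^(2*(t+1))*D, d)
              + (if t = 0 then legendreSym ℓ D * B ((ℓ:ℤ)^(2*0)*D, d)
                  + (if (ℓ:ℤ)^2 ∣ D then B (D/(ℓ:ℤ)^2, (ℓ:ℤ)^(2*0)*d) else 0)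
                else B ((ℓ:ℤ)^(2*(t-1))*D, d))
              - (ℓ:ℤ) * (if (ℓ:ℤ)^2 ∣ d then B ((ℓ:ℤ)^(2*t)*D, d/(ℓ:ℤ)^2) else 0)
              - legendreSym ℓ (-d) * B ((ℓ:ℤ)^(2*t)*D, d)))) := by
      refine Finset.sum_congr rfl fun t _ => ?_
      rw [hstep t]
    have hsub : ∀ t : ℕ, n + 1 - t - 1 = n - t := fun t => by omega
    simp only [hsub]
    have key := sum_key (legendreSym ℓ D) (ℓ:ℤ) (legendreSym ℓ (-d))
      (fun t => B ((ℓ:ℤ)^(2*t)*D, d))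
      (fun t => if (ℓ:ℤ)^2 ∣ D then B (D/(ℓ:ℤ)^2, (ℓ:ℤ)^(2*t)*d) else 0)
      (fun t => if (ℓ:ℤ)^2 ∣ d then B ((ℓ:ℤ)^(2*t)*D, d/(ℓ:ℤ)^2) else 0) n
    try simp only [] at key
    linear_combination hS2 + hS3 + e5 + e6 + key
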